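/- For all θ > 0 and h > 0, the integral over ℝ of θ² · sin²(π ω h) / (θ² + ω²)² dω converges and equals (π/(4θ)) · (1 − exp(−2π h θ) · (1 + 2π h θ)). -/

import Mathlib

open Real MeasureTheory Filter Set Complex
open scoped FourierTransform Topology

lemma tendsto_aux {θ : ℝ} (hθ : 0 < θ) :
    Tendsto (fun t : ℝ => (1 + θ * t) * Real.exp (-(θ * t))) atTop (𝓝 0) := by
  have hmul : Tendsto (fun t : ℝ => θ * t) atTop atTop := tendsto_id.const_mul_atTop hθ
  have h1 : Tendsto (fun t : ℝ => Real.exp (-(θ * t))) atTop (𝓝 0) :=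
    Real.tendsto_exp_neg_atTop_nhds_zero.comp hmul
  have h2 : Tendsto (fun t : ℝ => (θ * t) * Real.exp (-(θ * t))) atTop (𝓝 0) := by
    simpa [Function.comp_def] using (tendsto_pow_mul_exp_neg_atTop_nhds_zero 1).comp hmul
  have := h1.add h2
  simp only [add_zero] at this
  convert this using 2 with t
  ring

lemma integrableOn_aux {θ : ℝ} (hθ : 0 < θ) :
    IntegrableOn (fun t : ℝ => (1 + θ * t) * Real.exp (-(θ * t))) (Ioi 0) := by
  refine integrable_of_isBigO_exp_neg (half_pos hθ) (by fun_prop) ?_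
  rw [Asymptotics.isBigO_iff]
  refine ⟨1, ?_⟩
  have h0 : Tendsto (fun t : ℝ => |(1 + θ * t) * Real.exp (-(θ / 2 * t))|) atTop (𝓝 0) := by
    have : Tendsto (fun t : ℝ => (1 + θ / 2 * t) * Real.exp (-(θ / 2 * t))) atTop (𝓝 0) :=
      tendsto_aux (half_pos hθ)
    have h2 : Tendsto (fun t : ℝ => (θ / 2 * t) * Real.exp (-(θ / 2 * t))) atTop (𝓝 0) := by
      simpa [Function.comp_def] using (tendsto_pow_mul_exp_neg_atTop_nhds_zero 1).comp
        (tendsto_id.const_mul_atTop (half_pos hθ))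
    have h3 := this.add h2
    simp only [add_zero] at h3
    have h4 : Tendsto (fun t : ℝ => (1 + θ * t) * Real.exp (-(θ / 2 * t))) atTop (𝓝 0) := by
      convert h3 using 2 with t
      ring
    simpa using h4.abs
  filter_upwards [h0.eventually_le_const one_pos] with t ht
  have hsplit : Real.exp (-(θ * t)) = Real.exp (-(θ / 2 * t)) * Real.exp (-(θ / 2 * t)) := by
    rw [← Real.exp_add]; ring_nf
  rw [Real.norm_eq_abs, Real.norm_eq_abs, hsplit, ← mul_assoc, abs_mul]
  have h5 : |Real.exp (-(θ / 2) * t)| = |Real.exp (-(θ / 2 * t))| := by ring_nf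
  rw [h5]
  have h6 : |Real.exp (-(θ / 2 * t))| = Real.exp (-(θ / 2 * t)) := abs_of_pos (Real.exp_pos _)
  rw [h6]
  exact mul_le_mul_of_nonneg_right ht (Real.exp_pos _).le

lemma cexp_re_aux {θ b t : ℝ} : ‖Complex.exp (-(((θ:ℂ) + b * Complex.I) * t))‖ =
    Real.exp (-(θ * t)) := by
  rw [Complex.norm_exp]
  congr 1
  simp [Complex.mul_re]

lemma integrableOn_caux {θ : ℝ} (hθ : 0 < θ) (b : ℝ) :
    IntegrableOn (fun t : ℝ => ((1 + θ * t : ℝ) : ℂ) *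
      Complex.exp (-(((θ:ℂ) + b * Complex.I) * t))) (Ioi 0) := by
  refine Integrable.mono' (integrableOn_aux hθ) (Continuous.aestronglyMeasurable (by fun_prop)).restrict ?_
  rw [ae_restrict_iff' measurableSet_Ioi]
  filter_upwards with t ht
  rw [norm_mul, cexp_re_aux, Complex.norm_real, Real.norm_eq_abs,
    _root_.abs_of_nonneg (by nlinarith [Set.mem_Ioi.mp ht] : (0:ℝ) ≤ 1 + θ * t)]

lemma cexp_int {θ : ℝ} (hθ : 0 < θ) (b : ℝ) :
    ∫ t in Ioi (0:ℝ), ((1 + θ * t : ℝ) : ℂ) * Complex.exp (-(((θ:ℂ) + b * Complex.I) * t)) =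
      1 / ((θ:ℂ) + b * Complex.I) + (θ:ℂ) / ((θ:ℂ) + b * Complex.I) ^ 2 := by
  set c : ℂ := (θ:ℂ) + b * Complex.I with hc_def
  have hc : c ≠ 0 := by
    intro h
    have : c.re = 0 := by rw [h]; simp
    simp [hc_def, hθ.ne'] at this
  have hE : ∀ z : ℂ, HasDerivAt (fun z : ℂ => -((1 + θ * z) / c + θ / c ^ 2) *
      Complex.exp (-(c * z))) ((1 + θ * z) * Complex.exp (-(c * z))) z := by
    intro z
    have h1 : HasDerivAt (fun z : ℂ => -((1 + θ * z) / c + θ / c ^ 2)) (-(θ / c)) z := by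
      have : HasDerivAt (fun z : ℂ => 1 + (θ:ℂ) * z) θ z := by
        simpa using ((hasDerivAt_id z).const_mul (θ:ℂ)).const_add 1
      exact ((this.div_const c).add_const ((θ:ℂ) / c ^ 2)).neg
    have h2 : HasDerivAt (fun z : ℂ => Complex.exp (-(c * z))) (-c * Complex.exp (-(c * z))) z := by
      have : HasDerivAt (fun z : ℂ => -(c * z)) (-c) z := by
        exact (((hasDerivAt_id z).const_mul c).neg).congr_deriv (by simp)
      simpa [mul_comm] using this.cexp
    have := h1.mul h2
    refine this.congr_deriv ?_
    field_simp
    ring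
  have hderiv : ∀ x ∈ Ici (0:ℝ), HasDerivAt (fun t : ℝ => -((1 + θ * (t:ℂ)) / c + θ / c ^ 2) *
      Complex.exp (-(c * t))) (((1 + θ * x : ℝ) : ℂ) * Complex.exp (-(c * x))) x := by
    intro x _
    have := (hE x).comp_ofReal
    convert this using 2
    push_cast
    ring
  have htend : Tendsto (fun t : ℝ => -((1 + θ * (t:ℂ)) / c + θ / c ^ 2) *
      Complex.exp (-(c * t))) atTop (𝓝 0) := by
    apply squeeze_zero_norm' (a := fun t : ℝ => (‖(1:ℂ)/c‖ + ‖(θ:ℂ)/c^2‖) *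
      ((1 + θ * t) * Real.exp (-(θ * t))))
    · filter_upwards [Ici_mem_atTop (0:ℝ)] with t (ht : 0 ≤ t)
      rw [norm_mul, norm_neg, cexp_re_aux]
      have h1t : (0:ℝ) ≤ 1 + θ * t := by positivity
      have hb1 : ‖(1 + θ * (t:ℂ)) / c + (θ:ℂ) / c ^ 2‖ ≤
          (1 + θ * t) * (‖(1:ℂ)/c‖ + ‖(θ:ℂ)/c^2‖) := by
        refine (norm_add_le _ _).trans ?_
        have e1 : (1 + θ * (t:ℂ)) / c = ((1 + θ * t : ℝ) : ℂ) * (1 / c) := by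
          push_cast; ring
        rw [e1, norm_mul, Complex.norm_real, Real.norm_eq_abs, _root_.abs_of_nonneg h1t]
        have h1' : (1:ℝ) ≤ 1 + θ * t := by nlinarith
        nlinarith [norm_nonneg ((1:ℂ)/c), norm_nonneg ((θ:ℂ)/c^2)]
      calc ‖(1 + θ * (t:ℂ)) / c + (θ:ℂ) / c ^ 2‖ * Real.exp (-(θ * t))
          ≤ ((1 + θ * t) * (‖(1:ℂ)/c‖ + ‖(θ:ℂ)/c^2‖)) * Real.exp (-(θ * t)) :=
            mul_le_mul_of_nonneg_right hb1 (Real.exp_pos _).le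
        _ = (‖(1:ℂ)/c‖ + ‖(θ:ℂ)/c^2‖) * ((1 + θ * t) * Real.exp (-(θ * t))) := by ring
    · have := (tendsto_aux hθ).const_mul (‖(1:ℂ)/c‖ + ‖(θ:ℂ)/c^2‖)
      rwa [mul_zero] at this
  have := integral_Ioi_of_hasDerivAt_of_tendsto' hderiv (integrableOn_caux hθ b) htend
  rw [this]
  push_cast
  field_simp
  simp

lemma caux_ne {θ : ℝ} (hθ : 0 < θ) (b : ℝ) : (θ:ℂ) + b * Complex.I ≠ 0 := by
  intro h
  have : ((θ:ℂ) + b * Complex.I).re = 0 := by rw [h]; simp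
  simp [hθ.ne'] at this

lemma integrable_realf {θ : ℝ} (hθ : 0 < θ) :
    Integrable (fun t : ℝ => (1 + θ * |t|) * Real.exp (-(θ * |t|))) := by
  have hIoi : IntegrableOn (fun t : ℝ => (1 + θ * |t|) * Real.exp (-(θ * |t|))) (Ioi 0) :=
    (integrableOn_aux hθ).congr_fun (fun t ht => by rw [abs_of_pos ht]) measurableSet_Ioi
  have hIic : IntegrableOn (fun t : ℝ => (1 + θ * |t|) * Real.exp (-(θ * |t|))) (Iic 0) := by
    rw [← Measure.map_neg_eq_self (volume : Measure ℝ)]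
    let m : MeasurableEmbedding fun x : ℝ => -x := (Homeomorph.neg ℝ).measurableEmbedding
    rw [m.integrableOn_map_iff]
    simp_rw [Function.comp_def, abs_neg, neg_preimage, neg_Iic, neg_zero]
    exact Iff.mpr integrableOn_Ici_iff_integrableOn_Ioi hIoi
  rw [← integrableOn_univ, ← Iic_union_Ioi (a := (0:ℝ))]
  exact hIic.union hIoi

lemma fourier_realf {θ : ℝ} (hθ : 0 < θ) (u : ℝ) :
    𝓕 (fun t : ℝ => (((1 + θ * |t|) * Real.exp (-(θ * |t|)) : ℝ) : ℂ)) u =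
      ((4 * θ ^ 3 / (θ ^ 2 + (2 * π * u) ^ 2) ^ 2 : ℝ) : ℂ) := by
  set b : ℝ := 2 * π * u with hb
  rw [Real.fourier_real_eq_integral_exp_smul]
  have hint : Integrable (fun t : ℝ => Complex.exp (↑(-2 * π * t * u) * Complex.I) •
      (((1 + θ * |t|) * Real.exp (-(θ * |t|)) : ℝ) : ℂ)) := by
    apply ((integrable_realf hθ).ofReal (𝕜 := ℂ)).bdd_mul
    · apply Continuous.aestronglyMeasurable; fun_prop
    · refine Filter.Eventually.of_forall (fun t => ?_); show _ ≤ (1:ℝ)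
      rw [Complex.norm_exp]
      simp
  rw [← intervalIntegral.integral_Iic_add_Ioi (b := 0) hint.integrableOn hint.integrableOn]
  have hIoi : ∫ t in Ioi (0:ℝ), Complex.exp (↑(-2 * π * t * u) * Complex.I) •
      (((1 + θ * |t|) * Real.exp (-(θ * |t|)) : ℝ) : ℂ) =
      1 / ((θ:ℂ) + b * Complex.I) + (θ:ℂ) / ((θ:ℂ) + b * Complex.I) ^ 2 := by
    rw [← cexp_int hθ b]
    refine setIntegral_congr_fun measurableSet_Ioi (fun t ht => ?_)
    rw [abs_of_pos ht, smul_eq_mul]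
    have hexp : Complex.exp (-(((θ:ℂ) + b * Complex.I) * t)) =
        Complex.exp (↑(-(θ * t)) : ℂ) * Complex.exp (↑(-2 * π * t * u) * Complex.I) := by
      rw [← Complex.exp_add]; congr 1; push_cast [hb]; ring
    rw [hexp, ← Complex.ofReal_exp]
    push_cast
    ring
  have hIic : ∫ t in Iic (0:ℝ), Complex.exp (↑(-2 * π * t * u) * Complex.I) •
      (((1 + θ * |t|) * Real.exp (-(θ * |t|)) : ℝ) : ℂ) =
      1 / ((θ:ℂ) - b * Complex.I) + (θ:ℂ) / ((θ:ℂ) - b * Complex.I) ^ 2 := by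
    rw [show (0:ℝ) = -0 by norm_num, ← integral_comp_neg_Ioi]
    have hc := cexp_int hθ (-b)
    push_cast at hc
    rw [show (θ:ℂ) + -↑b * Complex.I = (θ:ℂ) - b * Complex.I by ring] at hc
    rw [← hc]
    refine setIntegral_congr_fun measurableSet_Ioi (fun t ht => ?_)
    rw [abs_neg, abs_of_pos ht, smul_eq_mul]
    have hexp : Complex.exp (-(((θ:ℂ) - b * Complex.I) * t)) =
        Complex.exp (↑(-(θ * t)) : ℂ) * Complex.exp (↑(-2 * π * (-t) * u) * Complex.I) := by
      rw [← Complex.exp_add]; congr 1; push_cast [hb]; ring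
    rw [hexp, ← Complex.ofReal_exp]
    push_cast
    ring
  rw [hIoi, hIic]
  have hcp := caux_ne hθ b
  have hcm : (θ:ℂ) - b * Complex.I ≠ 0 := by
    have := caux_ne hθ (-b)
    push_cast at this
    rwa [show (θ:ℂ) + -↑b * Complex.I = (θ:ℂ) - b * Complex.I by ring] at this
  have hS : ((θ:ℂ) ^ 2 + (b:ℂ) ^ 2) = ((θ:ℂ) + b * Complex.I) * ((θ:ℂ) - b * Complex.I) := by
    have h2 : (Complex.I) ^ 2 = -1 := Complex.I_sq
    ring_nf
    rw [h2]
    ring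
  have hS2 : ((θ:ℂ) ^ 2 + (b:ℂ) ^ 2) ≠ 0 := by rw [hS]; exact mul_ne_zero hcp hcm
  push_cast
  field_simp
  ring_nf
  rw [show (Complex.I) ^ 4 = 1 from Complex.I_pow_four]
  simp only [Complex.I_sq]
  ring

lemma integrable_R {θ : ℝ} (hθ : 0 < θ) :
    Integrable (fun u : ℝ => 4 * θ ^ 3 / (θ ^ 2 + (2 * π * u) ^ 2) ^ 2) := by
  set m : ℝ := min (θ ^ 2) 1 with hm
  have hm0 : 0 < m := lt_min (by positivity) one_pos
  have hπ : (1:ℝ) ≤ π := by nlinarith [Real.pi_gt_three]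
  refine Integrable.mono' (g := fun u : ℝ => (4 * θ ^ 3 / m ^ 2) * (1 + u ^ 2)⁻¹)
    (integrable_inv_one_add_sq.const_mul _) (Continuous.aestronglyMeasurable (by
      apply Continuous.div continuous_const (by fun_prop)
      intro x
      positivity)) ?_
  filter_upwards with u
  have hd : (0:ℝ) < θ ^ 2 + (2 * π * u) ^ 2 := by positivity
  have h1 : m * (1 + u ^ 2) ≤ θ ^ 2 + (2 * π * u) ^ 2 := by
    have h2 : m ≤ θ ^ 2 := min_le_left _ _
    have h3 : m ≤ 1 := min_le_right _ _
    have h4 : u ^ 2 ≤ (2 * π * u) ^ 2 := by nlinarith [sq_nonneg u, sq_nonneg (π*u), sq_nonneg (π*u-u), sq_nonneg (π*u+u)]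
    nlinarith [sq_nonneg u]
  have h5 : m ^ 2 * (1 + u ^ 2) ≤ (θ ^ 2 + (2 * π * u) ^ 2) ^ 2 := by
    have : (m * (1 + u ^ 2)) ^ 2 ≤ (θ ^ 2 + (2 * π * u) ^ 2) ^ 2 := by
      apply pow_le_pow_left₀ (by positivity) h1
    nlinarith [sq_nonneg u, sq_nonneg (1 + u ^ 2), hm0.le]
  rw [Real.norm_eq_abs, _root_.abs_of_nonneg (by positivity)]
  calc 4 * θ ^ 3 / (θ ^ 2 + (2 * π * u) ^ 2) ^ 2
      ≤ 4 * θ ^ 3 / (m ^ 2 * (1 + u ^ 2)) := by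
        apply div_le_div_of_nonneg_left (by positivity) (by positivity) h5
    _ = 4 * θ ^ 3 / m ^ 2 * (1 + u ^ 2)⁻¹ := by field_simp

lemma cos_integral {θ : ℝ} (hθ : 0 < θ) (v : ℝ) :
    ∫ u : ℝ, Real.cos (2 * π * u * v) * (4 * θ ^ 3 / (θ ^ 2 + (2 * π * u) ^ 2) ^ 2) =
      (1 + θ * |v|) * Real.exp (-(θ * |v|)) := by
  set f : ℝ → ℂ := fun t : ℝ => (((1 + θ * |t|) * Real.exp (-(θ * |t|)) : ℝ) : ℂ) with hf_def
  have hf : Integrable f := (integrable_realf hθ).ofReal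
  have hFf : Integrable (𝓕 f) := by
    refine ((integrable_R hθ).ofReal (𝕜 := ℂ)).congr
      (Filter.Eventually.of_forall fun u => ?_)
    exact (fourier_realf hθ u).symm
  have hcont : Continuous f := by
    apply Complex.continuous_ofReal.comp
    fun_prop
  have hinv := hf.fourierInv_fourier_eq hFf (hcont.continuousAt (x := v))
  rw [Real.fourierInv_eq_fourier_neg,
    Real.fourier_real_eq_integral_exp_smul] at hinv
  have hrw : ∫ u : ℝ, Complex.exp (↑(-2 * π * u * (-v)) * Complex.I) • 𝓕 f u =
      ∫ u : ℝ, Complex.exp (↑(2 * π * u * v) * Complex.I) *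
        ((4 * θ ^ 3 / (θ ^ 2 + (2 * π * u) ^ 2) ^ 2 : ℝ) : ℂ) := by
    refine integral_congr_ae (Filter.Eventually.of_forall fun u => ?_)
    simp only [hf_def]
    rw [fourier_realf hθ u, smul_eq_mul, show -2 * π * u * -v = 2 * π * u * v by ring]
  rw [hrw] at hinv
  have hint : Integrable (fun u : ℝ => Complex.exp (↑(2 * π * u * v) * Complex.I) *
      ((4 * θ ^ 3 / (θ ^ 2 + (2 * π * u) ^ 2) ^ 2 : ℝ) : ℂ)) := by
    apply Integrable.bdd_mul ((integrable_R hθ).ofReal (𝕜 := ℂ))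
    · apply Continuous.aestronglyMeasurable; fun_prop
    · refine Filter.Eventually.of_forall (fun u => ?_); show _ ≤ (1:ℝ)
      rw [Complex.norm_exp]
      simp
  have hre := congrArg Complex.re hinv
  have h2 := integral_re (𝕜 := ℂ) hint
  simp only [RCLike.re_to_complex] at h2
  rw [← h2] at hre
  simp only [hf_def, Complex.ofReal_re] at hre
  rw [← hre]
  refine integral_congr_ae (Filter.Eventually.of_forall fun u => ?_)
  show _ = (Complex.exp (↑(2 * π * u * v) * Complex.I) *
    ((4 * θ ^ 3 / (θ ^ 2 + (2 * π * u) ^ 2) ^ 2 : ℝ) : ℂ)).re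
  rw [Complex.mul_re, Complex.ofReal_re, Complex.ofReal_im, mul_zero, sub_zero,
    Complex.exp_ofReal_mul_I_re]

lemma integrable_aux2 {θ : ℝ} (hθ : 0 < θ) {c : ℝ → ℝ} (hc : Continuous c) {B : ℝ}
    (hbd : ∀ x, |c x| ≤ B) : Integrable (fun ω : ℝ => c ω / (θ ^ 2 + ω ^ 2) ^ 2) := by
  set m : ℝ := min (θ ^ 2) 1 with hm
  have hm0 : 0 < m := lt_min (by positivity) one_pos
  have hB : 0 ≤ B := le_trans (abs_nonneg _) (hbd 0)
  refine Integrable.mono' (g := fun u : ℝ => (B / m ^ 2) * (1 + u ^ 2)⁻¹)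
    (integrable_inv_one_add_sq.const_mul _) (Continuous.aestronglyMeasurable (by
      apply Continuous.div hc (by fun_prop)
      intro x
      positivity)) ?_
  filter_upwards with u
  have hd : (0:ℝ) < θ ^ 2 + u ^ 2 := by positivity
  have h1 : m * (1 + u ^ 2) ≤ θ ^ 2 + u ^ 2 := by
    have h2 : m ≤ θ ^ 2 := min_le_left _ _
    have h3 : m ≤ 1 := min_le_right _ _
    nlinarith [sq_nonneg u]
  have h5 : m ^ 2 * (1 + u ^ 2) ≤ (θ ^ 2 + u ^ 2) ^ 2 := by
    have : (m * (1 + u ^ 2)) ^ 2 ≤ (θ ^ 2 + u ^ 2) ^ 2 := by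
      apply pow_le_pow_left₀ (by positivity) h1
    nlinarith [sq_nonneg u, sq_nonneg (1 + u ^ 2), hm0.le]
  rw [Real.norm_eq_abs, abs_div, _root_.abs_of_nonneg (by positivity : (0:ℝ) ≤ (θ^2+u^2)^2)]
  calc |c u| / (θ ^ 2 + u ^ 2) ^ 2 ≤ B / (m ^ 2 * (1 + u ^ 2)) := by
        apply div_le_div₀ (by positivity) (hbd u) (by positivity) h5
    _ = B / m ^ 2 * (1 + u ^ 2)⁻¹ := by field_simp

lemma q_integral {θ : ℝ} (hθ : 0 < θ) (v : ℝ) (hv : 0 ≤ v) :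
    ∫ ω : ℝ, Real.cos (v * ω) / (θ ^ 2 + ω ^ 2) ^ 2 =
      π / (2 * θ ^ 3) * ((1 + θ * v) * Real.exp (-(θ * v))) := by
  have key := cos_integral hθ v
  rw [_root_.abs_of_nonneg hv] at key
  -- change of variables
  have hcomp := MeasureTheory.Measure.integral_comp_mul_left
    (fun ω : ℝ => Real.cos (v * ω) / (θ ^ 2 + ω ^ 2) ^ 2) (2 * π)
  have hπ : (0:ℝ) < 2 * π := by positivity
  have hlhs : ∫ u : ℝ, Real.cos (v * (2 * π * u)) / (θ ^ 2 + (2 * π * u) ^ 2) ^ 2 =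
      (4 * θ ^ 3)⁻¹ * ((1 + θ * v) * Real.exp (-(θ * v))) := by
    have e1 : ∀ u : ℝ, Real.cos (v * (2 * π * u)) / (θ ^ 2 + (2 * π * u) ^ 2) ^ 2 =
        (4 * θ ^ 3)⁻¹ * (Real.cos (2 * π * u * v) * (4 * θ ^ 3 / (θ ^ 2 + (2 * π * u) ^ 2) ^ 2)) := by
      intro u
      rw [show v * (2 * π * u) = 2 * π * u * v by ring]
      field_simp
    simp_rw [e1]
    rw [integral_const_mul, key]
  rw [hcomp, _root_.abs_of_pos (inv_pos.mpr hπ), smul_eq_mul] at hlhs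
  have := hlhs
  field_simp at this ⊢
  nlinarith [this, Real.pi_pos, Real.exp_pos (-(θ*v)), sq_nonneg θ]

/-- For all `θ > 0` and `h > 0`, the integral over `ℝ` of
`θ² sin²(π ω h) / (θ² + ω²)² dω` converges and equals
`(π/(4θ)) · (1 − exp(−2πhθ)(1 + 2πhθ))`. -/
theorem integral_matern_half_sq_sin_sq (θ h : ℝ) (hθ : 0 < θ) (hh : 0 < h) :
    Integrable (fun ω : ℝ => θ ^ 2 * Real.sin (π * ω * h) ^ 2 / (θ ^ 2 + ω ^ 2) ^ 2) ∧
    ∫ ω : ℝ, θ ^ 2 * Real.sin (π * ω * h) ^ 2 / (θ ^ 2 + ω ^ 2) ^ 2 =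
      π / (4 * θ) * (1 - Real.exp (-(2 * π * h * θ)) * (1 + 2 * π * h * θ)) := by
  have hT : Integrable (fun ω : ℝ => θ ^ 2 * Real.sin (π * ω * h) ^ 2 / (θ ^ 2 + ω ^ 2) ^ 2) := by
    refine integrable_aux2 hθ (by fun_prop) (B := θ ^ 2) fun x => ?_
    rw [abs_mul, _root_.abs_of_nonneg (sq_nonneg θ), _root_.abs_of_nonneg (sq_nonneg _)]
    nlinarith [Real.sin_sq_le_one (π * x * h), sq_nonneg θ]
  refine ⟨hT, ?_⟩
  have hp : Integrable (fun ω : ℝ => (1:ℝ) / (θ ^ 2 + ω ^ 2) ^ 2) :=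
    integrable_aux2 hθ continuous_const (B := 1) fun x => by norm_num
  have hq : Integrable (fun ω : ℝ => Real.cos (2 * π * h * ω) / (θ ^ 2 + ω ^ 2) ^ 2) :=
    integrable_aux2 hθ (by fun_prop) (B := 1) fun x => Real.abs_cos_le_one _
  have hP := q_integral hθ 0 le_rfl
  simp only [zero_mul, mul_zero, Real.cos_zero, neg_zero, Real.exp_zero, add_zero, mul_one] at hP
  have hQ := q_integral hθ (2 * π * h) (by positivity)
  have epoint : ∀ ω : ℝ, θ ^ 2 * Real.sin (π * ω * h) ^ 2 / (θ ^ 2 + ω ^ 2) ^ 2 =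
      θ ^ 2 / 2 * ((1:ℝ) / (θ ^ 2 + ω ^ 2) ^ 2) -
      θ ^ 2 / 2 * (Real.cos (2 * π * h * ω) / (θ ^ 2 + ω ^ 2) ^ 2) := by
    intro ω
    have hs : Real.sin (π * ω * h) ^ 2 = (1 - Real.cos (2 * π * h * ω)) / 2 := by
      rw [show 2 * π * h * ω = 2 * (π * ω * h) by ring, Real.cos_two_mul]
      have := Real.sin_sq_add_cos_sq (π * ω * h)
      nlinarith [this]
    rw [hs]
    ring
  rw [integral_congr_ae (Filter.Eventually.of_forall epoint)]
  rw [integral_sub ((hp.const_mul _)) ((hq.const_mul _)), integral_const_mul, integral_const_mul,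
    hP, hQ]
  have e2 : θ * (2 * π * h) = 2 * π * h * θ := by ring
  rw [e2]
  field_simp
  ring
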